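/- For all integers m ≥ 3, n ≥ 2, k ≥ 2 with m − k ≥ 1 and every signature σ : E(B(m,n,k)) → {+1,−1}, we have χ'(B(m,n,k),σ) = n+1 = Δ(B(m,n,k)); in other words, every signed generalized book graph is class 1. -/

import Mathlib

open scoped Classical

/-- The color set `M_q`: for `q = 2r`, `{±1, …, ±r}`; for `q = 2r+1`, `{0, ±1, …, ±r}`. -/
def colorSet (q : ℕ) : Set ℤ :=
  {c : ℤ | c.natAbs ≤ q / 2 ∧ (Even q → c ≠ 0)}

/-- A proper `q`-edge coloring of the signed graph `(G, σ)`, given as an assignment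
`γ v w` of a color to the incidence `(v, vw)`. -/
def IsProperSignedEdgeColoring {V : Type*} (G : SimpleGraph V)
    (σ : Sym2 V → ℤˣ) (q : ℕ) (γ : V → V → ℤ) : Prop :=
  (∀ ⦃v w : V⦄, G.Adj v w → γ v w ∈ colorSet q) ∧
  (∀ ⦃v w : V⦄, G.Adj v w → γ v w = (-(σ s(v, w) : ℤ)) * γ w v) ∧
  (∀ ⦃v w₁ w₂ : V⦄, G.Adj v w₁ → G.Adj v w₂ → w₁ ≠ w₂ → γ v w₁ ≠ γ v w₂)

/-- The chromatic index of a signed graph: the least `q` admitting a proper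
`q`-edge coloring. -/
noncomputable def signedChromaticIndex {V : Type*} (G : SimpleGraph V)
    (σ : Sym2 V → ℤˣ) : ℕ :=
  sInf {q : ℕ | ∃ γ : V → V → ℤ, IsProperSignedEdgeColoring G σ q γ}

/-- Vertices of the generalized book graph `B(m,n,k)`: the spine path `v₁ … v_k`
(`Sum.inl`) together with the internal vertices `u_j^i` of the `n` pages (`Sum.inr`). -/
abbrev BookVertex (m n k : ℕ) : Type := Fin k ⊕ Fin n × Fin (m - k)

/-- The generalized book graph `B(m,n,k)`: `n` cycles of length `m` sharing the
common path `v₁ v₂ ⋯ v_k`, the `i`-th cycle being `v₁ u₁ⁱ u₂ⁱ ⋯ u_{m-k}ⁱ v_k ⋯ v₂ v₁`. -/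
def bookGraph (m n k : ℕ) : SimpleGraph (BookVertex m n k) :=
  SimpleGraph.fromRel (fun x y =>
    match x, y with
    | Sum.inl a, Sum.inl b => (b : ℕ) = (a : ℕ) + 1
    | Sum.inl a, Sum.inr p =>
        ((a : ℕ) = 0 ∧ (p.2 : ℕ) = 0) ∨ ((a : ℕ) = k - 1 ∧ (p.2 : ℕ) = m - k - 1)
    | Sum.inr p, Sum.inr p' => p.1 = p'.1 ∧ (p'.2 : ℕ) = (p.2 : ℕ) + 1
    | Sum.inr _, Sum.inl _ => False)

/-- The signature `σ_l` on `B(m,n,k)` whose negative edges are exactly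
`v₁u₁ⁱ` for `1 ≤ i ≤ l`. -/
noncomputable def bookSigma (m n k l : ℕ) (hk : 0 < k) (hmk : 0 < m - k) :
    Sym2 (BookVertex m n k) → ℤˣ :=
  fun e =>
    if ∃ i : Fin n, (i : ℕ) < l ∧
        e = s(Sum.inl (⟨0, hk⟩ : Fin k),
              Sum.inr ((i, ⟨0, hmk⟩) : Fin n × Fin (m - k)))
    then -1 else 1

noncomputable instance (m n k : ℕ) : DecidableRel (bookGraph m n k).Adj :=
  fun _ _ => Classical.propDecidable _

section AuxColor

lemma mem_colorSet_iff {q : ℕ} {c : ℤ} :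
    c ∈ colorSet q ↔ c.natAbs ≤ q / 2 ∧ (q % 2 = 0 → c ≠ 0) := by
  simp [colorSet, Nat.even_iff]

lemma colorSet_neg {q : ℕ} {c : ℤ} (h : c ∈ colorSet q) : -c ∈ colorSet q := by
  rw [mem_colorSet_iff] at h ⊢
  exact ⟨by simpa using h.1, fun he => neg_ne_zero.mpr (h.2 he)⟩

lemma neg_unit_mul_mem {q : ℕ} (u : ℤˣ) {c : ℤ} (h : c ∈ colorSet q) :
    -(u : ℤ) * c ∈ colorSet q := by
  rcases Int.units_eq_one_or u with hu | hu <;> rw [hu]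
  · simpa using colorSet_neg h
  · simpa using h

lemma unit_cancel (u : ℤˣ) (x : ℤ) : -(u : ℤ) * (-(u : ℤ) * x) = x := by
  rcases Int.units_eq_one_or u with hu | hu <;> rw [hu] <;> simp

lemma unit_natAbs_mul (u : ℤˣ) (x : ℤ) : ((u : ℤ) * x).natAbs = x.natAbs := by
  rcases Int.units_eq_one_or u with hu | hu <;> rw [hu] <;> simp

def bcol (q : ℕ) (j : ℕ) : ℤ :=
  if j < 2 * (q / 2) then
    (if j % 2 = 0 then ((j / 2 : ℕ) : ℤ) + 1 else -(((j / 2 : ℕ) : ℤ) + 1))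
  else 0

lemma bcol_mem {q j : ℕ} (hj : j < q) : bcol q j ∈ colorSet q := by
  rw [mem_colorSet_iff]; unfold bcol
  split_ifs with h1 h2 <;> refine ⟨by omega, fun hq => by omega⟩

lemma bcol_inj {q j j' : ℕ} (hj : j < q) (hj' : j' < q) (h : bcol q j = bcol q j') : j = j' := by
  unfold bcol at h; split_ifs at h <;> omega

lemma bcol_surj {q : ℕ} {c : ℤ} (hc : c ∈ colorSet q) : ∃ j, j < q ∧ bcol q j = c := by
  rw [mem_colorSet_iff] at hc
  obtain ⟨h1, h2⟩ := hc
  rcases lt_trichotomy c 0 with hc0 | rfl | hc0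
  · have hA : 1 ≤ c.natAbs := by omega
    refine ⟨2 * c.natAbs - 1, by omega, ?_⟩
    unfold bcol
    rw [if_pos (by omega), if_neg (by omega)]
    omega
  · have hq : ¬ (q % 2 = 0) := fun h => h2 h rfl
    exact ⟨q - 1, by omega, by unfold bcol; rw [if_neg (by omega)]⟩
  · have hA : 1 ≤ c.natAbs := by omega
    refine ⟨2 * c.natAbs - 2, by omega, ?_⟩
    unfold bcol
    rw [if_pos (by omega), if_pos (by omega)]
    omega

def MF (q : ℕ) : Finset ℤ := (Finset.range q).image (bcol q)

lemma mem_MF_iff {q : ℕ} {c : ℤ} : c ∈ MF q ↔ c ∈ colorSet q := by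
  constructor
  · intro h; obtain ⟨j, hj, rfl⟩ := Finset.mem_image.mp h
    exact bcol_mem (Finset.mem_range.mp hj)
  · intro h; obtain ⟨j, hj, e⟩ := bcol_surj h
    exact Finset.mem_image.mpr ⟨j, Finset.mem_range.mpr hj, e⟩

lemma card_MF {q : ℕ} : (MF q).card = q := by
  rw [MF, Finset.card_image_of_injOn, Finset.card_range]
  intro a ha b hb hab
  exact bcol_inj (Finset.mem_range.mp ha) (Finset.mem_range.mp hb) hab

lemma exists_avoid {n : ℕ} (S : Finset ℤ) (hS : S.card = n + 1) {s : ℤ} (hs : s ∈ S)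
    (c : Fin n → ℤ) {i0 i1 : Fin n} (hc : c i0 ≠ c i1) :
    ∃ t : Fin n → ℤ, Function.Injective t ∧ ∀ i, t i ∈ S ∧ t i ≠ s ∧ t i ≠ c i := by
  have hall : ∀ u : Finset (Fin n), u.card ≤ (u.biUnion (fun i => (S.erase s).erase (c i))).card := by
    intro u
    by_cases hu : u = Finset.univ
    · subst hu
      have hsub : S.erase s ⊆ Finset.univ.biUnion (fun i => (S.erase s).erase (c i)) := by
        intro x hx
        rcases eq_or_ne x (c i0) with he | he
        · exact Finset.mem_biUnion.mpr ⟨i1, Finset.mem_univ _,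
            Finset.mem_erase.mpr ⟨by rw [he]; exact hc, hx⟩⟩
        · exact Finset.mem_biUnion.mpr ⟨i0, Finset.mem_univ _, Finset.mem_erase.mpr ⟨he, hx⟩⟩
      have h1 : (S.erase s).card = n := by rw [Finset.card_erase_of_mem hs, hS]; omega
      have h2 := Finset.card_le_card hsub
      have h3 : (Finset.univ : Finset (Fin n)).card = n := by simp
      omega
    · have hlt : u.card < n := by
        have h1 := Finset.card_le_univ u
        have h2 : u.card ≠ Fintype.card (Fin n) := fun h => hu (Finset.eq_univ_of_card u h)
        simp only [Fintype.card_fin] at h1 h2; omega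
      rcases Finset.eq_empty_or_nonempty u with rfl | ⟨i, hi⟩
      · simp
      · have hsub := Finset.subset_biUnion_of_mem (fun i => (S.erase s).erase (c i)) hi
        have hSe : (S.erase s).card = n := by rw [Finset.card_erase_of_mem hs, hS]; omega
        have e1 : (S.erase s).card - 1 ≤ ((S.erase s).erase (c i)).card := by
          by_cases hci : c i ∈ S.erase s
          · rw [Finset.card_erase_of_mem hci]
          · rw [Finset.erase_eq_of_notMem hci]; omega
        have hle : ((S.erase s).erase (c i)).card ≤ (u.biUnion fun i => (S.erase s).erase (c i)).card :=
          Finset.card_le_card hsub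
        omega
  obtain ⟨t, tinj, tmem⟩ := (Finset.all_card_le_biUnion_card_iff_existsInjective'
      (fun i : Fin n => (S.erase s).erase (c i))).mp hall
  exact ⟨t, tinj, fun i =>
      ⟨Finset.mem_of_mem_erase (Finset.mem_of_mem_erase (tmem i)),
       Finset.ne_of_mem_erase (Finset.mem_of_mem_erase (tmem i)),
       Finset.ne_of_mem_erase (tmem i)⟩⟩

def wcol (n : ℕ) : ℤ := if (n+1) % 2 = 0 then 2 else 0

lemma wcol_ne (n : ℕ) : wcol n ≠ 1 ∧ wcol n ≠ -1 := by
  unfold wcol; split_ifs <;> norm_num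

def pick3 (n : ℕ) (u v : ℤ) : ℤ :=
  if u ≠ 1 ∧ v ≠ 1 then 1 else if u ≠ -1 ∧ v ≠ -1 then -1 else wcol n

lemma pick3_spec (n : ℕ) (u v : ℤ) : pick3 n u v ≠ u ∧ pick3 n u v ≠ v := by
  unfold pick3
  split_ifs with h1 h2
  · exact ⟨Ne.symm h1.1, Ne.symm h1.2⟩
  · exact ⟨Ne.symm h2.1, Ne.symm h2.2⟩
  · have h1' : u = 1 ∨ v = 1 := by tauto
    have h2' : u = -1 ∨ v = -1 := by tauto
    have hw := wcol_ne n
    constructor <;> intro he <;> rcases h1' with h | h <;> rcases h2' with h' | h' <;>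
      simp_all

lemma pick3_mem {n : ℕ} (hn : 2 ≤ n) (u v : ℤ) : pick3 n u v ∈ colorSet (n+1) := by
  rw [mem_colorSet_iff]
  unfold pick3 wcol
  split_ifs <;> constructor <;> omega

end AuxColor


section Adj
variable {m n k : ℕ}

lemma adj_inl_inl {a b : Fin k} :
    (bookGraph m n k).Adj (Sum.inl a) (Sum.inl b) ↔ ((b:ℕ) = (a:ℕ)+1 ∨ (a:ℕ) = (b:ℕ)+1) := by
  simp only [bookGraph, SimpleGraph.fromRel_adj, ne_eq, Sum.inl.injEq, Fin.ext_iff]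
  omega

lemma adj_inl_inr {a : Fin k} {i : Fin n} {j : Fin (m-k)} :
    (bookGraph m n k).Adj (Sum.inl a) (Sum.inr (i, j)) ↔
      (((a:ℕ) = 0 ∧ (j:ℕ) = 0) ∨ ((a:ℕ) = k - 1 ∧ (j:ℕ) = m - k - 1)) := by
  simp only [bookGraph, SimpleGraph.fromRel_adj, ne_eq]
  tauto

lemma adj_inr_inl {a : Fin k} {i : Fin n} {j : Fin (m-k)} :
    (bookGraph m n k).Adj (Sum.inr (i, j)) (Sum.inl a) ↔
      (((a:ℕ) = 0 ∧ (j:ℕ) = 0) ∨ ((a:ℕ) = k - 1 ∧ (j:ℕ) = m - k - 1)) := by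
  rw [SimpleGraph.adj_comm]; exact adj_inl_inr

lemma adj_inr_inr {i i' : Fin n} {j j' : Fin (m-k)} :
    (bookGraph m n k).Adj (Sum.inr (i, j)) (Sum.inr (i', j')) ↔
      (i = i' ∧ ((j':ℕ) = (j:ℕ)+1 ∨ (j:ℕ) = (j':ℕ)+1)) := by
  simp only [bookGraph, SimpleGraph.fromRel_adj, ne_eq, Sum.inr.injEq, Prod.mk.injEq]
  constructor
  · rintro ⟨hne, (⟨h1, h2⟩ | ⟨h1, h2⟩)⟩
    · exact ⟨h1, Or.inl h2⟩
    · exact ⟨h1.symm, Or.inr h2⟩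
  · rintro ⟨rfl, h⟩
    refine ⟨?_, by tauto⟩
    rintro ⟨-, h2⟩
    rw [Fin.ext_iff] at h2; omega

end Adj

section BookDefs
variable (m n k : ℕ) (σ : Sym2 (BookVertex m n k) → ℤˣ)

def vS (hk : 2 ≤ k) (a : ℕ) : BookVertex m n k := Sum.inl ⟨min a (k-1), by omega⟩

def vP (hp : 1 ≤ m - k) (i : Fin n) (j : ℕ) : BookVertex m n k :=
  Sum.inr (i, ⟨min j (m - k - 1), by omega⟩)

def sS (hk : 2 ≤ k) (a : ℕ) : ℤ := (σ s(vS m n k hk a, vS m n k hk (a+1)) : ℤ)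

def sE (hk : 2 ≤ k) (hp : 1 ≤ m - k) (i : Fin n) (j : ℕ) : ℤ :=
  if j = 0 then (σ s(vS m n k hk 0, vP m n k hp i 0) : ℤ)
  else if j ≤ m - k - 1 then (σ s(vP m n k hp i (j-1), vP m n k hp i j) : ℤ)
  else (σ s(vP m n k hp i (m - k - 1), vS m n k hk (k-1)) : ℤ)

lemma sS_unit (hk : 2 ≤ k) (a : ℕ) : ∃ u : ℤˣ, sS m n k σ hk a = (u:ℤ) := ⟨_, rfl⟩

lemma sE_unit (hk : 2 ≤ k) (hp : 1 ≤ m - k) (i : Fin n) (j : ℕ) :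
    ∃ u : ℤˣ, sE m n k σ hk hp i j = (u:ℤ) := by
  unfold sE; split_ifs <;> exact ⟨_, rfl⟩

def spc (hk : 2 ≤ k) : ℕ → ℤ := fun a =>
  Nat.rec 1 (fun b ih => pick3 n (-(sS m n k σ hk b) * ih) (-(sS m n k σ hk b) * ih)) a

lemma spc_zero (hk : 2 ≤ k) : spc m n k σ hk 0 = 1 := rfl

lemma spc_succ (hk : 2 ≤ k) (a : ℕ) :
    spc m n k σ hk (a+1)
      = pick3 n (-(sS m n k σ hk a) * spc m n k σ hk a) (-(sS m n k σ hk a) * spc m n k σ hk a) := rfl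

def skc (hk : 2 ≤ k) : ℤ := -(sS m n k σ hk (k-2)) * spc m n k σ hk (k-2)

def cE (hk : 2 ≤ k) (hp : 1 ≤ m - k) (i : Fin n) : ℤ :=
  sE m n k σ hk hp i 0 * (sE m n k σ hk hp i (m-k) * bcol (n+1) ((i:ℕ)+1))

def fP (hk : 2 ≤ k) (hp : 1 ≤ m - k) (t : Fin n → ℤ) (i : Fin n) : ℕ → ℤ := fun j =>
  Nat.rec (bcol (n+1) ((i:ℕ)+1))
    (fun j ih =>
      if j + 1 = m - k then -(sE m n k σ hk hp i (m-k)) * t i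
      else pick3 n (-(sE m n k σ hk hp i j) * ih)
        (if j + 1 = m - k - 1 then
            sE m n k σ hk hp i (m-k-1) * (sE m n k σ hk hp i (m-k) * t i)
          else -(sE m n k σ hk hp i j) * ih)) j

lemma fP_zero (hk : 2 ≤ k) (hp : 1 ≤ m - k) (t : Fin n → ℤ) (i : Fin n) :
    fP m n k σ hk hp t i 0 = bcol (n+1) ((i:ℕ)+1) := rfl

lemma fP_succ (hk : 2 ≤ k) (hp : 1 ≤ m - k) (t : Fin n → ℤ) (i : Fin n) (j : ℕ) :
    fP m n k σ hk hp t i (j+1)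
      = if j + 1 = m - k then -(sE m n k σ hk hp i (m-k)) * t i
        else pick3 n (-(sE m n k σ hk hp i j) * fP m n k σ hk hp t i j)
          (if j + 1 = m - k - 1 then
              sE m n k σ hk hp i (m-k-1) * (sE m n k σ hk hp i (m-k) * t i)
            else -(sE m n k σ hk hp i j) * fP m n k σ hk hp t i j) := rfl

def gam (hk : 2 ≤ k) (hp : 1 ≤ m - k) (t : Fin n → ℤ) :
    BookVertex m n k → BookVertex m n k → ℤ
  | Sum.inl a, Sum.inl b =>
      if (b:ℕ) = (a:ℕ)+1 then spc m n k σ hk (a:ℕ)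
      else if (a:ℕ) = (b:ℕ)+1 then -(sS m n k σ hk (b:ℕ)) * spc m n k σ hk (b:ℕ) else 0
  | Sum.inl a, Sum.inr pr =>
      if (a:ℕ) = 0 ∧ (pr.2:ℕ) = 0 then bcol (n+1) ((pr.1:ℕ)+1) else t pr.1
  | Sum.inr pr, Sum.inl a =>
      if (a:ℕ) = 0 ∧ (pr.2:ℕ) = 0 then -(sE m n k σ hk hp pr.1 0) * bcol (n+1) ((pr.1:ℕ)+1)
      else -(sE m n k σ hk hp pr.1 (m-k)) * t pr.1
  | Sum.inr pr, Sum.inr pr' =>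
      if (pr'.2:ℕ) = (pr.2:ℕ)+1 then fP m n k σ hk hp t pr.1 ((pr.2:ℕ)+1)
      else if (pr.2:ℕ) = (pr'.2:ℕ)+1 then
        -(sE m n k σ hk hp pr.1 (pr.2:ℕ)) * fP m n k σ hk hp t pr.1 (pr.2:ℕ)
      else 0

end BookDefs

section EdgeIds
variable {m n k : ℕ} {σ : Sym2 (BookVertex m n k) → ℤˣ}

lemma vS_eq (hk : 2 ≤ k) (a : Fin k) : vS m n k hk (a:ℕ) = Sum.inl a := by
  have := a.isLt
  unfold vS
  congr 1
  exact Fin.ext (by simp; omega)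

lemma vP_eq (hp : 1 ≤ m - k) (i : Fin n) (j : Fin (m-k)) :
    vP m n k hp i (j:ℕ) = Sum.inr (i, j) := by
  have := j.isLt
  unfold vP
  congr 2
  exact Fin.ext (by simp; omega)

lemma sS_edge (hk : 2 ≤ k) {a b : Fin k} (h : (b:ℕ) = (a:ℕ)+1) :
    sS m n k σ hk (a:ℕ) = (σ s(Sum.inl a, Sum.inl b) : ℤ) := by
  unfold sS
  rw [show (a:ℕ)+1 = (b:ℕ) from h.symm, vS_eq, vS_eq]

lemma sE_zero_eq (hk : 2 ≤ k) (hp : 1 ≤ m - k) {a : Fin k} {i : Fin n} {j : Fin (m-k)}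
    (ha : (a:ℕ) = 0) (hj : (j:ℕ) = 0) :
    sE m n k σ hk hp i 0 = (σ s(Sum.inl a, Sum.inr (i, j)) : ℤ) := by
  unfold sE
  rw [if_pos rfl, show vS m n k hk 0 = Sum.inl a from by rw [← ha, vS_eq],
    show vP m n k hp i 0 = Sum.inr (i, j) from by rw [← hj, vP_eq]]

lemma sE_last_eq (hk : 2 ≤ k) (hp : 1 ≤ m - k) {a : Fin k} {i : Fin n} {j : Fin (m-k)}
    (ha : (a:ℕ) = k - 1) (hj : (j:ℕ) = m - k - 1) :
    sE m n k σ hk hp i (m-k) = (σ s(Sum.inl a, Sum.inr (i, j)) : ℤ) := by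
  unfold sE
  rw [if_neg (by omega), if_neg (by omega),
    show vS m n k hk (k-1) = Sum.inl a from by rw [← ha, vS_eq],
    show vP m n k hp i (m-k-1) = Sum.inr (i, j) from by rw [← hj, vP_eq],
    Sym2.eq_swap]

lemma sE_mid_eq (hk : 2 ≤ k) (hp : 1 ≤ m - k) {i : Fin n} {j j' : Fin (m-k)}
    (h : (j':ℕ) = (j:ℕ)+1) :
    sE m n k σ hk hp i ((j:ℕ)+1) = (σ s(Sum.inr (i, j), Sum.inr (i, j')) : ℤ) := by
  have hj' := j'.isLt
  unfold sE
  rw [if_neg (by omega), if_pos (by omega)]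
  rw [show (j:ℕ)+1-1 = (j:ℕ) from by omega, vP_eq,
    show (j:ℕ)+1 = (j':ℕ) from h.symm, vP_eq]
end EdgeIds

section MemLemmas
variable {m n k : ℕ} {σ : Sym2 (BookVertex m n k) → ℤˣ}

lemma spc_mem (hn : 2 ≤ n) (hk : 2 ≤ k) (a : ℕ) : spc m n k σ hk a ∈ colorSet (n+1) := by
  induction a with
  | zero =>
    rw [spc_zero, mem_colorSet_iff]
    refine ⟨by simp only [Int.natAbs_one]; omega, fun _ => one_ne_zero⟩
  | succ a ih =>
    rw [spc_succ]; exact pick3_mem hn _ _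

lemma spc_ne (hk : 2 ≤ k) (a : ℕ) :
    spc m n k σ hk (a+1) ≠ -(sS m n k σ hk a) * spc m n k σ hk a := by
  rw [spc_succ]; exact (pick3_spec _ _ _).1

lemma bcol_zero_val (hn : 2 ≤ n) : bcol (n+1) 0 = 1 := by
  unfold bcol; rw [if_pos (by omega), if_pos (by omega)]; norm_num

lemma bcol_one_val (hn : 2 ≤ n) : bcol (n+1) 1 = -1 := by
  unfold bcol; rw [if_pos (by omega), if_neg (by omega)]; norm_num

lemma bcol_two_abs (hn : 2 ≤ n) : (bcol (n+1) 2).natAbs ≠ 1 := by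
  unfold bcol; split_ifs <;> omega

end MemLemmas

section Construction
variable {m n k : ℕ} {σ : Sym2 (BookVertex m n k) → ℤˣ}

lemma exists_proper (m n k : ℕ) (σ : Sym2 (BookVertex m n k) → ℤˣ)
    (hm : 3 ≤ m) (hn : 2 ≤ n) (hk : 2 ≤ k) (hp : 1 ≤ m - k) :
    ∃ γ, IsProperSignedEdgeColoring (bookGraph m n k) σ (n+1) γ := by
  classical
  have hskmem : skc m n k σ hk ∈ MF (n+1) := by
    rw [mem_MF_iff]; unfold skc
    obtain ⟨u, hu⟩ := sS_unit m n k σ hk (k-2)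
    rw [hu]; exact neg_unit_mul_mem u (spc_mem hn hk _)
  have habs : ∀ i : Fin n, (cE m n k σ hk hp i).natAbs = (bcol (n+1) ((i:ℕ)+1)).natAbs := by
    intro i; unfold cE
    obtain ⟨u0, h0⟩ := sE_unit m n k σ hk hp i 0
    obtain ⟨u1, h1⟩ := sE_unit m n k σ hk hp i (m-k)
    rw [h0, h1, unit_natAbs_mul, unit_natAbs_mul]
  have hc01 : cE m n k σ hk hp ⟨0, by omega⟩ ≠ cE m n k σ hk hp ⟨1, by omega⟩ := by
    intro he
    have h2 := congrArg Int.natAbs he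
    rw [habs, habs] at h2
    norm_num at h2
    rw [bcol_one_val hn] at h2
    exact bcol_two_abs hn (by rw [← h2]; norm_num)
  obtain ⟨t, tinj, tspec⟩ := exists_avoid (MF (n+1)) card_MF hskmem (cE m n k σ hk hp) hc01
  have tmem : ∀ i, t i ∈ colorSet (n+1) := fun i => mem_MF_iff.mp (tspec i).1
  have tsk : ∀ i, t i ≠ skc m n k σ hk := fun i => (tspec i).2.1
  have tcE : ∀ i, t i ≠ cE m n k σ hk hp i := fun i => (tspec i).2.2
  have fmem : ∀ (i : Fin n) (j : ℕ), fP m n k σ hk hp t i j ∈ colorSet (n+1) := by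
    intro i j
    induction j with
    | zero => rw [fP_zero]; exact bcol_mem (by have := i.isLt; omega)
    | succ j ih =>
      rw [fP_succ]
      by_cases h : j + 1 = m - k
      · rw [if_pos h]
        obtain ⟨u, hu⟩ := sE_unit m n k σ hk hp i (m-k)
        rw [hu]; exact neg_unit_mul_mem u (tmem i)
      · rw [if_neg h]; exact pick3_mem hn _ _
  have fne : ∀ (i : Fin n) (j : ℕ), j < m - k →
      fP m n k σ hk hp t i (j+1) ≠ -(sE m n k σ hk hp i j) * fP m n k σ hk hp t i j := by
    intro i j hj
    by_cases hjp : j + 1 = m - k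
    · rw [fP_succ, if_pos hjp]
      by_cases h1 : m - k = 1
      · have hj0 : j = 0 := by omega
        subst hj0
        rw [fP_zero]
        intro he
        apply tcE i
        unfold cE
        obtain ⟨u0, h0⟩ := sE_unit m n k σ hk hp i 0
        obtain ⟨u2, h2⟩ := sE_unit m n k σ hk hp i (m-k)
        rw [h0, h2] at he ⊢
        rcases Int.units_eq_one_or u0 with e0 | e0 <;> rcases Int.units_eq_one_or u2 with e2 | e2 <;>
            rw [e0, e2] at he ⊢ <;>
          simp only [Units.val_one, Units.val_neg, neg_neg, neg_mul, one_mul, mul_one,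
            mul_neg, neg_inj] at he ⊢ <;> linarith
      · obtain ⟨j', rfl⟩ : ∃ j', j = j' + 1 := ⟨j - 1, by omega⟩
        rw [fP_succ, if_neg (by omega), if_pos (by omega)]
        intro he
        have hne := (pick3_spec n (-(sE m n k σ hk hp i j') * fP m n k σ hk hp t i j')
          (sE m n k σ hk hp i (m-k-1) * (sE m n k σ hk hp i (m-k) * t i))).2
        apply hne
        rw [show j' + 1 = m - k - 1 from by omega] at he
        obtain ⟨u1, h1⟩ := sE_unit m n k σ hk hp i (m-k-1)
        obtain ⟨u2, h2⟩ := sE_unit m n k σ hk hp i (m-k)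
        rw [h1, h2] at he ⊢
        rcases Int.units_eq_one_or u1 with e1 | e1 <;> rcases Int.units_eq_one_or u2 with e2 | e2 <;>
            rw [e1, e2] at he ⊢ <;>
          simp only [Units.val_one, Units.val_neg, neg_neg, neg_mul, one_mul, mul_one,
            mul_neg, neg_inj] at he ⊢ <;> linarith
    · rw [fP_succ, if_neg hjp]
      exact (pick3_spec _ _ _).1
  refine ⟨gam m n k σ hk hp t, ?_, ?_, ?_⟩
  · -- membership
    intro v w hadj
    rcases v with a | ⟨i, j⟩ <;> rcases w with b | ⟨i', j'⟩
    · rw [adj_inl_inl] at hadj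
      simp only [gam]
      rcases hadj with h | h
      · rw [if_pos h]; exact spc_mem hn hk _
      · rw [if_neg (by omega), if_pos h]
        obtain ⟨u, hu⟩ := sS_unit m n k σ hk (b:ℕ)
        rw [hu]; exact neg_unit_mul_mem u (spc_mem hn hk _)
    · simp only [gam]
      split_ifs with h
      · exact bcol_mem (by have := i'.isLt; omega)
      · exact tmem i'
    · simp only [gam]
      split_ifs with h
      · obtain ⟨u, hu⟩ := sE_unit m n k σ hk hp i 0
        rw [hu]; exact neg_unit_mul_mem u (bcol_mem (by have := i.isLt; omega))
      · obtain ⟨u, hu⟩ := sE_unit m n k σ hk hp i (m-k)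
        rw [hu]; exact neg_unit_mul_mem u (tmem i)
    · rw [adj_inr_inr] at hadj
      obtain ⟨rfl, hor⟩ := hadj
      simp only [gam]
      rcases hor with h | h
      · rw [if_pos h]; exact fmem i _
      · rw [if_neg (by omega), if_pos h]
        obtain ⟨u, hu⟩ := sE_unit m n k σ hk hp i (j:ℕ)
        rw [hu]; exact neg_unit_mul_mem u (fmem i _)
  · -- symmetry
    intro v w hadj
    rcases v with a | ⟨i, j⟩ <;> rcases w with b | ⟨i', j'⟩
    · rw [adj_inl_inl] at hadj
      simp only [gam]
      rcases hadj with h | h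
      · rw [if_pos h, if_neg (by omega), if_pos h]
        rw [← sS_edge hk h]
        obtain ⟨u, hu⟩ := sS_unit m n k σ hk (a:ℕ)
        rw [hu, unit_cancel]
      · rw [if_neg (by omega), if_pos h, if_pos h]
        rw [show s(Sum.inl a, Sum.inl b) = s(Sum.inl b, Sum.inl a) from Sym2.eq_swap,
          ← sS_edge hk h]
    · rw [adj_inl_inr] at hadj
      simp only [gam]
      rcases hadj with ⟨ha, hj⟩ | ⟨ha, hj⟩
      · rw [if_pos ⟨ha, hj⟩, if_pos ⟨ha, hj⟩, ← sE_zero_eq hk hp ha hj]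
        obtain ⟨u, hu⟩ := sE_unit m n k σ hk hp i' 0
        rw [hu, unit_cancel]
      · have hfalse : ¬((a:ℕ) = 0 ∧ (j':ℕ) = 0) := by omega
        rw [if_neg hfalse, if_neg hfalse, ← sE_last_eq hk hp ha hj]
        obtain ⟨u, hu⟩ := sE_unit m n k σ hk hp i' (m-k)
        rw [hu, unit_cancel]
    · rw [adj_inr_inl] at hadj
      simp only [gam]
      rcases hadj with ⟨ha, hj⟩ | ⟨ha, hj⟩
      · rw [if_pos ⟨ha, hj⟩, if_pos ⟨ha, hj⟩,
          show s(Sum.inr (i,j), Sum.inl b) = s(Sum.inl b, Sum.inr (i,j)) from Sym2.eq_swap,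
          ← sE_zero_eq hk hp ha hj]
      · have hfalse : ¬((b:ℕ) = 0 ∧ (j:ℕ) = 0) := by omega
        rw [if_neg hfalse, if_neg hfalse,
          show s(Sum.inr (i,j), Sum.inl b) = s(Sum.inl b, Sum.inr (i,j)) from Sym2.eq_swap,
          ← sE_last_eq hk hp ha hj]
    · rw [adj_inr_inr] at hadj
      obtain ⟨rfl, hor⟩ := hadj
      simp only [gam]
      rcases hor with h | h
      · rw [if_pos h, if_neg (by omega), if_pos h]
        rw [show (j':ℕ) = (j:ℕ)+1 from h, ← sE_mid_eq hk hp h]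
        obtain ⟨u, hu⟩ := sE_unit m n k σ hk hp i ((j:ℕ)+1)
        rw [hu, unit_cancel]
      · rw [if_neg (by omega), if_pos h, if_pos h]
        rw [show s(Sum.inr (i,j), Sum.inr (i,j')) = s(Sum.inr (i,j'), Sum.inr (i,j)) from
          Sym2.eq_swap]
        rw [show (j:ℕ) = (j':ℕ)+1 from h, ← sE_mid_eq hk hp h]
  · -- distinctness
    intro v w₁ w₂ h1 h2 hne
    rcases v with a | ⟨i, j⟩
    · have key1 : ∀ (b : Fin k) (i₂ : Fin n) (j₂ : Fin (m-k)),
          (bookGraph m n k).Adj (Sum.inl a) (Sum.inl b) →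
          (bookGraph m n k).Adj (Sum.inl a) (Sum.inr (i₂, j₂)) →
          gam m n k σ hk hp t (Sum.inl a) (Sum.inl b)
            ≠ gam m n k σ hk hp t (Sum.inl a) (Sum.inr (i₂, j₂)) := by
        intro b i₂ j₂ hb hr
        rw [adj_inl_inl] at hb; rw [adj_inl_inr] at hr
        simp only [gam]
        rcases hr with ⟨ha, hj⟩ | ⟨ha, hj⟩
        · rcases hb with hb | hb
          · rw [if_pos hb, if_pos ⟨ha, hj⟩]
            rw [show (a:ℕ) = 0 from ha, spc_zero, ← bcol_zero_val hn]
            intro he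
            have := bcol_inj (q := n+1) (by omega) (by have := i₂.isLt; omega) he
            omega
          · exact absurd hb (by omega)
        · rcases hb with hb | hb
          · exact absurd hb (by have := b.isLt; omega)
          · have hfalse : ¬((a:ℕ) = 0 ∧ (j₂:ℕ) = 0) := by omega
            rw [if_neg (by omega), if_pos hb, if_neg hfalse]
            rw [show (b:ℕ) = k-2 from by omega]
            exact Ne.symm (tsk i₂)
      rcases w₁ with b₁ | ⟨i₁, j₁⟩ <;> rcases w₂ with b₂ | ⟨i₂, j₂⟩
      · rw [adj_inl_inl] at h1 h2
        have hbb : (b₁:ℕ) ≠ (b₂:ℕ) := fun he => hne (by rw [show b₁ = b₂ from Fin.ext he])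
        simp only [gam]
        rcases h1 with h1 | h1 <;> rcases h2 with h2 | h2
        · exact absurd (by omega : (b₁:ℕ) = (b₂:ℕ)) hbb
        · rw [if_pos h1, if_neg (by omega), if_pos h2]
          rw [show (a:ℕ) = (b₂:ℕ)+1 from h2, spc_succ]
          exact (pick3_spec _ _ _).1
        · rw [if_neg (by omega), if_pos h1, if_pos h2]
          rw [show (a:ℕ) = (b₁:ℕ)+1 from h1, spc_succ]
          exact Ne.symm (pick3_spec _ _ _).1
        · exact absurd (by omega : (b₁:ℕ) = (b₂:ℕ)) hbb
      · exact key1 b₁ i₂ j₂ h1 h2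
      · exact (key1 b₂ i₁ j₁ h2 h1).symm
      · rw [adj_inl_inr] at h1 h2
        simp only [gam]
        rcases h1 with ⟨ha, hj1⟩ | ⟨ha, hj1⟩
        · rcases h2 with ⟨-, hj2⟩ | ⟨ha2, -⟩
          · rw [if_pos ⟨ha, hj1⟩, if_pos ⟨ha, hj2⟩]
            have hii : (i₁:ℕ) ≠ (i₂:ℕ) := by
              intro he; apply hne
              rw [show i₁ = i₂ from Fin.ext he, show j₁ = j₂ from Fin.ext (by omega)]
            intro he
            have := bcol_inj (q := n+1) (by have := i₁.isLt; omega)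
              (by have := i₂.isLt; omega) he
            omega
          · exact absurd ha2 (by omega)
        · rcases h2 with ⟨ha2, -⟩ | ⟨-, hj2⟩
          · exact absurd ha2 (by omega)
          · have hfalse1 : ¬((a:ℕ) = 0 ∧ (j₁:ℕ) = 0) := by omega
            have hfalse2 : ¬((a:ℕ) = 0 ∧ (j₂:ℕ) = 0) := by omega
            rw [if_neg hfalse1, if_neg hfalse2]
            intro he
            apply hne
            rw [show i₁ = i₂ from tinj he, show j₁ = j₂ from Fin.ext (by omega)]
    · have key2 : ∀ (b : Fin k) (i₂ : Fin n) (j₂ : Fin (m-k)),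
          (bookGraph m n k).Adj (Sum.inr (i,j)) (Sum.inl b) →
          (bookGraph m n k).Adj (Sum.inr (i,j)) (Sum.inr (i₂, j₂)) →
          gam m n k σ hk hp t (Sum.inr (i,j)) (Sum.inl b)
            ≠ gam m n k σ hk hp t (Sum.inr (i,j)) (Sum.inr (i₂, j₂)) := by
        intro b i₂ j₂ hb hr
        rw [adj_inr_inl] at hb; rw [adj_inr_inr] at hr
        obtain ⟨rfl, hor⟩ := hr
        simp only [gam]
        rcases hb with ⟨hb1, hj1⟩ | ⟨hb1, hj1⟩
        · rcases hor with h | h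
          · rw [if_pos ⟨hb1, hj1⟩, if_pos h]
            have hc := fne i (j:ℕ) (by have := j.isLt; omega)
            rw [hj1, fP_zero] at hc
            rw [hj1]
            exact Ne.symm hc
          · exact absurd h (by omega)
        · rcases hor with h | h
          · exact absurd h (by have := j₂.isLt; omega)
          · rw [if_neg (by omega), if_neg (by omega), if_pos h]
            have hc := fne i (m-k-1) (by omega)
            rw [fP_succ, if_pos (by omega)] at hc
            rw [hj1]
            exact hc
      rcases w₁ with b₁ | ⟨i₁, j₁⟩ <;> rcases w₂ with b₂ | ⟨i₂, j₂⟩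
      · rw [adj_inr_inl] at h1 h2
        simp only [gam]
        rcases h1 with ⟨hb1, hj1⟩ | ⟨hb1, hj1⟩ <;> rcases h2 with ⟨hb2, hj2⟩ | ⟨hb2, hj2⟩
        · exact absurd (by rw [show b₁ = b₂ from Fin.ext (by omega)]) hne
        · rw [if_pos ⟨hb1, hj1⟩, if_neg (by omega)]
          have hc := fne i (m-k-1) (by omega)
          rw [fP_succ, if_pos (by omega)] at hc
          rw [show m-k-1 = 0 from by omega, fP_zero] at hc
          exact Ne.symm hc
        · rw [if_neg (by omega), if_pos ⟨hb2, hj2⟩]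
          have hc := fne i (m-k-1) (by omega)
          rw [fP_succ, if_pos (by omega)] at hc
          rw [show m-k-1 = 0 from by omega, fP_zero] at hc
          exact hc
        · exact absurd (by rw [show b₁ = b₂ from Fin.ext (by omega)]) hne
      · exact key2 b₁ i₂ j₂ h1 h2
      · exact (key2 b₂ i₁ j₁ h2 h1).symm
      · rw [adj_inr_inr] at h1 h2
        obtain ⟨rfl, hor1⟩ := h1
        obtain ⟨rfl, hor2⟩ := h2
        simp only [gam]
        rcases hor1 with h1' | h1' <;> rcases hor2 with h2' | h2'
        · exact absurd (by rw [show j₁ = j₂ from Fin.ext (by omega)]) hne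
        · rw [if_pos h1', if_neg (by omega), if_pos h2']
          exact fne i (j:ℕ) (by have := j₁.isLt; omega)
        · rw [if_neg (by omega), if_pos h1', if_pos h2']
          exact Ne.symm (fne i (j:ℕ) (by have := j₂.isLt; omega))
        · exact absurd (by rw [show j₁ = j₂ from Fin.ext (by omega)]) hne

end Construction

section Bounds

lemma coloring_ge (m n k : ℕ) (σ : Sym2 (BookVertex m n k) → ℤˣ)
    (hn : 2 ≤ n) (hk : 2 ≤ k) (hp : 1 ≤ m - k)
    {q : ℕ} {γ : BookVertex m n k → BookVertex m n k → ℤ}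
    (h : IsProperSignedEdgeColoring (bookGraph m n k) σ q γ) : n + 1 ≤ q := by
  obtain ⟨h1, -, h3⟩ := h
  set v0 : BookVertex m n k := Sum.inl ⟨0, by omega⟩ with hv0
  set N : Finset (BookVertex m n k) :=
    insert (Sum.inl (⟨1, by omega⟩ : Fin k))
      ((Finset.univ : Finset (Fin n)).image
        fun i => Sum.inr (i, (⟨0, by omega⟩ : Fin (m-k)))) with hN
  have hadj : ∀ w ∈ N, (bookGraph m n k).Adj v0 w := by
    intro w hw
    rw [hN, Finset.mem_insert] at hw
    rcases hw with rfl | hw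
    · rw [hv0, adj_inl_inl]; left; rfl
    · obtain ⟨i, -, rfl⟩ := Finset.mem_image.mp hw
      rw [hv0, adj_inl_inr]; left; exact ⟨rfl, rfl⟩
  have hinjf : Function.Injective
      (fun i : Fin n => (Sum.inr (i, (⟨0, by omega⟩ : Fin (m-k))) : BookVertex m n k)) :=
    fun a b hab => by simpa using hab
  have hcardN : N.card = n + 1 := by
    rw [hN, Finset.card_insert_of_notMem (by simp),
      Finset.card_image_of_injective _ hinjf, Finset.card_univ, Fintype.card_fin]
  have himg : N.image (γ v0) ⊆ (Finset.range q).image (bcol q) := by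
    intro x hx
    obtain ⟨w, hw, rfl⟩ := Finset.mem_image.mp hx
    obtain ⟨jj, hjj, e⟩ := bcol_surj (h1 (hadj w hw))
    exact Finset.mem_image.mpr ⟨jj, Finset.mem_range.mpr hjj, e⟩
  have h4 : (N.image (γ v0)).card = n + 1 := by
    rw [Finset.card_image_of_injOn, hcardN]
    intro w₁ hw₁ w₂ hw₂ he
    by_contra hne
    exact h3 (hadj w₁ hw₁) (hadj w₂ hw₂) hne he
  have h5 := Finset.card_le_card himg
  have h6 := Finset.card_image_le (s := Finset.range q) (f := bcol q)
  rw [Finset.card_range] at h6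
  omega

lemma book_degree_le (m n k : ℕ) (hn : 2 ≤ n) (hk : 2 ≤ k) (hp : 1 ≤ m - k) :
    ∀ v : BookVertex m n k, (bookGraph m n k).degree v ≤ n + 1 := by
  intro v
  rw [← SimpleGraph.card_neighborFinset_eq_degree]
  rcases v with a | ⟨i, j⟩
  · have hal := a.isLt
    by_cases ha0 : (a:ℕ) = 0
    · refine le_trans (Finset.card_le_card (?_ : _ ⊆ insert (Sum.inl (⟨1, by omega⟩ : Fin k))
        ((Finset.univ : Finset (Fin n)).image
          fun i => (Sum.inr (i, (⟨0, by omega⟩ : Fin (m-k))) : BookVertex m n k)))) ?_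
      · intro w hw
        rw [SimpleGraph.mem_neighborFinset] at hw
        rcases w with b | ⟨i', j'⟩
        · rw [adj_inl_inl] at hw
          apply Finset.mem_insert.mpr; left
          rcases hw with h | h
          · rw [show b = ⟨1, by omega⟩ from Fin.ext (by (try simp only [Fin.val_mk] at *); omega)]
          · exfalso; (try simp only [Fin.val_mk] at *); omega
        · rw [adj_inl_inr] at hw
          apply Finset.mem_insert.mpr; right
          rcases hw with ⟨-, hj⟩ | ⟨ha, -⟩
          · exact Finset.mem_image.mpr ⟨i', Finset.mem_univ _,
              by rw [show j' = ⟨0, by omega⟩ from Fin.ext (by (try simp only [Fin.val_mk] at *); omega)]⟩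
          · exfalso; (try simp only [Fin.val_mk] at *); omega
      · refine le_trans (Finset.card_insert_le _ _) ?_
        have h6 := Finset.card_image_le (s := (Finset.univ : Finset (Fin n)))
          (f := fun i => (Sum.inr (i, (⟨0, by omega⟩ : Fin (m-k))) : BookVertex m n k))
        simp only [Finset.card_univ, Fintype.card_fin] at h6
        omega
    · by_cases hak : (a:ℕ) = k-1
      · refine le_trans (Finset.card_le_card (?_ : _ ⊆ insert (Sum.inl (⟨k-2, by omega⟩ : Fin k))
          ((Finset.univ : Finset (Fin n)).image
            fun i => (Sum.inr (i, (⟨m-k-1, by omega⟩ : Fin (m-k))) : BookVertex m n k)))) ?_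
        · intro w hw
          rw [SimpleGraph.mem_neighborFinset] at hw
          rcases w with b | ⟨i', j'⟩
          · rw [adj_inl_inl] at hw
            apply Finset.mem_insert.mpr; left
            have hbl := b.isLt
            rcases hw with h | h
            · exfalso; (try simp only [Fin.val_mk] at *); omega
            · rw [show b = ⟨k-2, by omega⟩ from Fin.ext (by (try simp only [Fin.val_mk] at *); omega)]
          · rw [adj_inl_inr] at hw
            apply Finset.mem_insert.mpr; right
            rcases hw with ⟨ha, -⟩ | ⟨-, hj⟩
            · exfalso; (try simp only [Fin.val_mk] at *); omega
            · exact Finset.mem_image.mpr ⟨i', Finset.mem_univ _,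
                by rw [show j' = ⟨m-k-1, by omega⟩ from Fin.ext (by (try simp only [Fin.val_mk] at *); omega)]⟩
        · refine le_trans (Finset.card_insert_le _ _) ?_
          have h6 := Finset.card_image_le (s := (Finset.univ : Finset (Fin n)))
            (f := fun i => (Sum.inr (i, (⟨m-k-1, by omega⟩ : Fin (m-k))) : BookVertex m n k))
          simp only [Finset.card_univ, Fintype.card_fin] at h6
          omega
      · refine le_trans (Finset.card_le_card (?_ : (_ : Finset (BookVertex m n k)) ⊆
          {(Sum.inl (⟨(a:ℕ)-1, by omega⟩ : Fin k) : BookVertex m n k),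
           Sum.inl (⟨(a:ℕ)+1, by omega⟩ : Fin k)})) ?_
        · intro w hw
          rw [SimpleGraph.mem_neighborFinset] at hw
          rcases w with b | ⟨i', j'⟩
          · rw [adj_inl_inl] at hw
            rcases hw with h | h
            · apply Finset.mem_insert.mpr; right; apply Finset.mem_singleton.mpr
              rw [show b = ⟨(a:ℕ)+1, by omega⟩ from Fin.ext (by (try simp only [Fin.val_mk] at *); omega)]
            · apply Finset.mem_insert.mpr; left
              rw [show b = ⟨(a:ℕ)-1, by omega⟩ from Fin.ext (by (try simp only [Fin.val_mk] at *); omega)]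
          · rw [adj_inl_inr] at hw
            rcases hw with ⟨ha, -⟩ | ⟨ha, -⟩ <;> exact absurd ha (by (try simp only [Fin.val_mk] at *); omega)
        · refine le_trans (Finset.card_insert_le _ _) ?_
          simp only [Finset.card_singleton]
          omega
  · have hjl := j.isLt
    refine le_trans (Finset.card_le_card (?_ : (_ : Finset (BookVertex m n k)) ⊆
      {(if (j:ℕ) = 0 then (Sum.inl (⟨0, by omega⟩ : Fin k) : BookVertex m n k)
        else Sum.inr (i, ⟨(j:ℕ)-1, by omega⟩)),
       (if (j:ℕ) = m-k-1 then (Sum.inl (⟨k-1, by omega⟩ : Fin k) : BookVertex m n k)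
        else Sum.inr (i, ⟨min ((j:ℕ)+1) (m-k-1), by omega⟩))})) ?_
    · intro w hw
      rw [SimpleGraph.mem_neighborFinset] at hw
      rcases w with b | ⟨i', j'⟩
      · rw [adj_inr_inl] at hw
        rcases hw with ⟨hb, hj⟩ | ⟨hb, hj⟩
        · apply Finset.mem_insert.mpr; left
          rw [if_pos hj, show b = ⟨0, by omega⟩ from Fin.ext (by (try simp only [Fin.val_mk] at *); omega)]
        · apply Finset.mem_insert.mpr; right; apply Finset.mem_singleton.mpr
          rw [if_pos hj, show b = ⟨k-1, by omega⟩ from Fin.ext (by (try simp only [Fin.val_mk] at *); omega)]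
      · rw [adj_inr_inr] at hw
        obtain ⟨rfl, hor⟩ := hw
        have hj'l := j'.isLt
        rcases hor with h | h
        · apply Finset.mem_insert.mpr; right; apply Finset.mem_singleton.mpr
          rw [if_neg (by omega),
            show j' = ⟨min ((j:ℕ)+1) (m-k-1), by omega⟩ from
              Fin.ext (show (j':ℕ) = min ((j:ℕ)+1) (m-k-1) by omega)]
        · apply Finset.mem_insert.mpr; left
          rw [if_neg (by omega),
            show j' = ⟨(j:ℕ)-1, by omega⟩ from Fin.ext (show (j':ℕ) = (j:ℕ)-1 by omega)]
    · refine le_trans (Finset.card_insert_le _ _) ?_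
      simp only [Finset.card_singleton]
      omega

lemma book_degree_v0 (m n k : ℕ) (hn : 2 ≤ n) (hk : 2 ≤ k) (hp : 1 ≤ m - k) :
    (bookGraph m n k).degree (Sum.inl (⟨0, by omega⟩ : Fin k)) = n + 1 := by
  rw [← SimpleGraph.card_neighborFinset_eq_degree]
  have hinjf : Function.Injective
      (fun i : Fin n => (Sum.inr (i, (⟨0, by omega⟩ : Fin (m-k))) : BookVertex m n k)) :=
    fun a b hab => by simpa using hab
  have hset : (bookGraph m n k).neighborFinset (Sum.inl ⟨0, by omega⟩) =
      insert (Sum.inl (⟨1, by omega⟩ : Fin k))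
        ((Finset.univ : Finset (Fin n)).image
          fun i => (Sum.inr (i, (⟨0, by omega⟩ : Fin (m-k))) : BookVertex m n k)) := by
    ext w
    rw [SimpleGraph.mem_neighborFinset]
    constructor
    · intro hw
      rcases w with b | ⟨i', j'⟩
      · rw [adj_inl_inl] at hw
        apply Finset.mem_insert.mpr; left
        rcases hw with h | h
        · rw [show b = ⟨1, by omega⟩ from Fin.ext (by (try simp only [Fin.val_mk] at *); omega)]
        · exfalso; (try simp only [Fin.val_mk] at *); omega
      · rw [adj_inl_inr] at hw
        apply Finset.mem_insert.mpr; right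
        rcases hw with ⟨-, hj⟩ | ⟨ha, -⟩
        · exact Finset.mem_image.mpr ⟨i', Finset.mem_univ _,
            by rw [show j' = ⟨0, by omega⟩ from Fin.ext (by (try simp only [Fin.val_mk] at *); omega)]⟩
        · exfalso; (try simp only [Fin.val_mk] at *); omega
    · intro hw
      rcases Finset.mem_insert.mp hw with rfl | hw
      · rw [adj_inl_inl]; left; rfl
      · obtain ⟨i, -, rfl⟩ := Finset.mem_image.mp hw
        rw [adj_inl_inr]; left; exact ⟨rfl, rfl⟩
  rw [hset, Finset.card_insert_of_notMem (by simp),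
    Finset.card_image_of_injective _ hinjf, Finset.card_univ, Fintype.card_fin]

end Bounds



/-- For all `m ≥ 3`, `n ≥ 2`, `k ≥ 2` with `m - k ≥ 1` and every
signature `σ`, the signed generalized book graph `(B(m,n,k), σ)` has chromatic index
`n + 1 = Δ(B(m,n,k))`: every signed generalized book graph is class 1. -/
theorem book_class_one (m n k : ℕ) (hm : 3 ≤ m) (hn : 2 ≤ n) (hk : 2 ≤ k)
    (hmk : 1 ≤ m - k) (σ : Sym2 (BookVertex m n k) → ℤˣ) :
    signedChromaticIndex (bookGraph m n k) σ = n + 1 ∧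
    (bookGraph m n k).maxDegree = n + 1 := by
  have hprop := exists_proper m n k σ hm hn hk hmk
  constructor
  · apply le_antisymm
    · exact Nat.sInf_le hprop
    · apply le_csInf ⟨n+1, hprop⟩
      rintro q ⟨γ, hγ⟩
      exact coloring_ge m n k σ hn hk hmk hγ
  · apply le_antisymm
    · exact SimpleGraph.maxDegree_le_of_forall_degree_le _ _ (book_degree_le m n k hn hk hmk)
    · rw [← book_degree_v0 m n k hn hk hmk]
      exact SimpleGraph.degree_le_maxDegree _ _
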